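/- arXiv:1305.6675 — 3 statements merged into one kernel-verified Lean document; each statement's English description precedes it below -/
import Mathlib

section
/- Suppose u, v are C¹ real functions on an open neighborhood of (1,0) in ℝ² satisfying the Cauchy–Riemann equations and u² + v² = 1/x. Then at every point of the neighborhood, ∂u/∂x = −u/(2x) and ∂v/∂x = −v/(2x). -/
theorem x_derivatives_from_CR_and_constraint
    (W : Set (ℝ × ℝ)) (u v : ℝ × ℝ → ℝ)
    (hW : IsOpen W) (hmem : ((1, 0) : ℝ × ℝ) ∈ W)
    (hu : ContDiffOn ℝ 1 u W) (hv : ContDiffOn ℝ 1 v W)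
    (hx : ∀ p ∈ W, 0 < p.1)
    (hCR : ∀ p ∈ W,
      deriv (fun x => u (x, p.2)) p.1 = deriv (fun y => v (p.1, y)) p.2 ∧
      deriv (fun y => u (p.1, y)) p.2 = - deriv (fun x => v (x, p.2)) p.1)
    (hcon : ∀ p ∈ W, u p ^ 2 + v p ^ 2 = 1 / p.1) :
    ∀ p ∈ W,
      deriv (fun x => u (x, p.2)) p.1 = - u p / (2 * p.1) ∧
      deriv (fun x => v (x, p.2)) p.1 = - v p / (2 * p.1) := by
  intro p hp
  have hxp : 0 < p.1 := hx p hp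
  have hdu : DifferentiableAt ℝ u p :=
    (hu.contDiffAt (hW.mem_nhds hp)).differentiableAt one_ne_zero
  have hdv : DifferentiableAt ℝ v p :=
    (hv.contDiffAt (hW.mem_nhds hp)).differentiableAt one_ne_zero
  have hLx : DifferentiableAt ℝ (fun x : ℝ => ((x, p.2) : ℝ × ℝ)) p.1 :=
    differentiableAt_id.prodMk (differentiableAt_const _)
  have hLy : DifferentiableAt ℝ (fun y : ℝ => ((p.1, y) : ℝ × ℝ)) p.2 :=
    (differentiableAt_const _).prodMk differentiableAt_id
  have hpx : ((p.1, p.2) : ℝ × ℝ) = p := Prod.mk.eta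
  have hU : DifferentiableAt ℝ (fun x => u (x, p.2)) p.1 := by
    have := hdu.comp p.1 (by rw [← hpx] at hdu; exact hLx)
    exact (hpx ▸ hdu).comp p.1 hLx
  have hV : DifferentiableAt ℝ (fun x => v (x, p.2)) p.1 :=
    (hpx ▸ hdv).comp p.1 hLx
  have hUy : DifferentiableAt ℝ (fun y => u (p.1, y)) p.2 :=
    (hpx ▸ hdu).comp p.2 hLy
  have hVy : DifferentiableAt ℝ (fun y => v (p.1, y)) p.2 :=
    (hpx ▸ hdv).comp p.2 hLy
  set a := deriv (fun x => u (x, p.2)) p.1 with ha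
  set b := deriv (fun x => v (x, p.2)) p.1 with hb
  set c := deriv (fun y => u (p.1, y)) p.2 with hc
  set d := deriv (fun y => v (p.1, y)) p.2 with hd
  have hUa : HasDerivAt (fun x => u (x, p.2)) a p.1 := hU.hasDerivAt
  have hVb : HasDerivAt (fun x => v (x, p.2)) b p.1 := hV.hasDerivAt
  have hUc : HasDerivAt (fun y => u (p.1, y)) c p.2 := hUy.hasDerivAt
  have hVd : HasDerivAt (fun y => v (p.1, y)) d p.2 := hVy.hasDerivAt
  -- eventual equality along the horizontal line
  have hEvx : (fun x => u (x, p.2) ^ 2 + v (x, p.2) ^ 2) =ᶠ[nhds p.1] fun x => 1 / x := by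
    have hcont : Continuous (fun x : ℝ => ((x, p.2) : ℝ × ℝ)) :=
      continuous_id.prodMk continuous_const
    have hopen : IsOpen ((fun x : ℝ => ((x, p.2) : ℝ × ℝ)) ⁻¹' W) := hW.preimage hcont
    have hp1 : p.1 ∈ (fun x : ℝ => ((x, p.2) : ℝ × ℝ)) ⁻¹' W := by
      simp [Set.mem_preimage, hpx, hp]
    filter_upwards [hopen.mem_nhds hp1] with x hxW
    exact hcon _ hxW
  have hEvy : (fun y => u (p.1, y) ^ 2 + v (p.1, y) ^ 2) =ᶠ[nhds p.2] fun _ => 1 / p.1 := by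
    have hcont : Continuous (fun y : ℝ => ((p.1, y) : ℝ × ℝ)) :=
      continuous_const.prodMk continuous_id
    have hopen : IsOpen ((fun y : ℝ => ((p.1, y) : ℝ × ℝ)) ⁻¹' W) := hW.preimage hcont
    have hp2 : p.2 ∈ (fun y : ℝ => ((p.1, y) : ℝ × ℝ)) ⁻¹' W := by
      simp [Set.mem_preimage, hpx, hp]
    filter_upwards [hopen.mem_nhds hp2] with y hyW
    exact hcon _ hyW
  -- derivative of the constraint in x
  have hsum_x : HasDerivAt (fun x => u (x, p.2) ^ 2 + v (x, p.2) ^ 2)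
      (2 * u (p.1, p.2) ^ 1 * a + 2 * v (p.1, p.2) ^ 1 * b) p.1 :=
    ((hUa.pow 2).add (hVb.pow 2)).congr_deriv (by push_cast; ring)
  have hinv : HasDerivAt (fun x : ℝ => 1 / x) (-(p.1 ^ 2)⁻¹) p.1 := by
    simpa [one_div] using hasDerivAt_inv (ne_of_gt hxp)
  have heq1 : 2 * u (p.1, p.2) ^ 1 * a + 2 * v (p.1, p.2) ^ 1 * b = -(p.1 ^ 2)⁻¹ := by
    have h1 : HasDerivAt (fun x : ℝ => 1 / x)
        (2 * u (p.1, p.2) ^ 1 * a + 2 * v (p.1, p.2) ^ 1 * b) p.1 :=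
      hsum_x.congr_of_eventuallyEq hEvx.symm
    exact h1.unique hinv
  -- derivative of the constraint in y
  have hsum_y : HasDerivAt (fun y => u (p.1, y) ^ 2 + v (p.1, y) ^ 2)
      (2 * u (p.1, p.2) ^ 1 * c + 2 * v (p.1, p.2) ^ 1 * d) p.2 :=
    ((hUc.pow 2).add (hVd.pow 2)).congr_deriv (by push_cast; ring)
  have heq2 : 2 * u (p.1, p.2) ^ 1 * c + 2 * v (p.1, p.2) ^ 1 * d = 0 := by
    have h2 : HasDerivAt (fun _ : ℝ => 1 / p.1)
        (2 * u (p.1, p.2) ^ 1 * c + 2 * v (p.1, p.2) ^ 1 * d) p.2 :=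
      hsum_y.congr_of_eventuallyEq hEvy.symm
    exact h2.unique (hasDerivAt_const _ _)
  obtain ⟨hCR1, hCR2⟩ := hCR p hp
  have had : a = d := hCR1
  have hcb : c = -b := hCR2
  have hcons := hcon p hp
  rw [← hpx] at hcons
  have hgoal : a = - u (p.1, p.2) / (2 * p.1) ∧ b = - v (p.1, p.2) / (2 * p.1) := by
    simp only [pow_one] at heq1 heq2
    rw [hcb, ← had] at heq2
    have hne : p.1 ≠ 0 := ne_of_gt hxp
    have hcons' : (u (p.1, p.2) ^ 2 + v (p.1, p.2) ^ 2) * p.1 = 1 := by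
      field_simp at hcons; linarith [hcons]
    have heq1' : (2 * u (p.1, p.2) * a + 2 * v (p.1, p.2) * b) * p.1 ^ 2 = -1 := by
      field_simp at heq1 ⊢; linarith [heq1]
    constructor
    · field_simp
      linear_combination u (p.1, p.2) * heq1' + v (p.1, p.2) * p.1 ^ 2 * heq2 -
        2 * a * p.1 * hcons'
    · field_simp
      linear_combination v (p.1, p.2) * heq1' - u (p.1, p.2) * p.1 ^ 2 * heq2 -
        2 * b * p.1 * hcons'
  rw [← hpx]
  exact hgoal
end

section
/- If u, v : ℝ² → ℝ are C¹ near (1,0), satisfy the Cauchy–Riemann equations, and u² + v² = 1/x, then the function w = u·√x satisfies both w_x = 0 (w independent of x) and w_yy = −w/(4x²); these two conditions together with w² + (v√x)² = 1 force a contradiction, so no such u, v exist. -/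
theorem w_properties_and_contradiction
    (W : Set (ℝ × ℝ)) (u v : ℝ × ℝ → ℝ)
    (hW : IsOpen W) (hmem : ((1, 0) : ℝ × ℝ) ∈ W)
    (hu : ContDiffOn ℝ 1 u W) (hv : ContDiffOn ℝ 1 v W)
    (hx : ∀ p ∈ W, 0 < p.1)
    (hCR : ∀ p ∈ W,
      deriv (fun x => u (x, p.2)) p.1 = deriv (fun y => v (p.1, y)) p.2 ∧
      deriv (fun y => u (p.1, y)) p.2 = - deriv (fun x => v (x, p.2)) p.1)
    (hcon : ∀ p ∈ W, u p ^ 2 + v p ^ 2 = 1 / p.1) :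
    (∀ p ∈ W, deriv (fun x => u (x, p.2) * Real.sqrt x) p.1 = 0) ∧
    (∀ p ∈ W, deriv (deriv (fun y => u (p.1, y) * Real.sqrt p.1)) p.2
      = - (u p * Real.sqrt p.1) / (4 * p.1 ^ 2)) ∧
    (∀ p ∈ W, (u p * Real.sqrt p.1) ^ 2 + (v p * Real.sqrt p.1) ^ 2 = 1) ∧
    False := by
  -- differentiability
  have hud : ∀ p ∈ W, DifferentiableAt ℝ u p := fun p hp =>
    (hu.differentiableOn one_ne_zero p hp).differentiableAt (hW.mem_nhds hp)
  have hvd : ∀ p ∈ W, DifferentiableAt ℝ v p := fun p hp =>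
    (hv.differentiableOn one_ne_zero p hp).differentiableAt (hW.mem_nhds hp)
  -- partial derivatives
  set ux : ℝ × ℝ → ℝ := fun p => fderiv ℝ u p (1, 0) with hux_def
  set uy : ℝ × ℝ → ℝ := fun p => fderiv ℝ u p (0, 1) with huy_def
  set vx : ℝ × ℝ → ℝ := fun p => fderiv ℝ v p (1, 0) with hvx_def
  set vy : ℝ × ℝ → ℝ := fun p => fderiv ℝ v p (0, 1) with hvy_def
  have hlineX : ∀ (c : ℝ) (x : ℝ), HasDerivAt (fun t : ℝ => (t, c)) ((1 : ℝ), (0 : ℝ)) x :=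
    fun c x => (hasDerivAt_id x).prodMk (hasDerivAt_const x c)
  have hlineY : ∀ (c : ℝ) (y : ℝ), HasDerivAt (fun t : ℝ => (c, t)) ((0 : ℝ), (1 : ℝ)) y :=
    fun c y => (hasDerivAt_const y c).prodMk (hasDerivAt_id y)
  have hux : ∀ p ∈ W, HasDerivAt (fun x => u (x, p.2)) (ux p) p.1 := by
    intro p hp
    have := (hud p hp).hasFDerivAt.comp_hasDerivAt p.1 (hlineX p.2 p.1)
    exact this
  have huy : ∀ p ∈ W, HasDerivAt (fun y => u (p.1, y)) (uy p) p.2 := by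
    intro p hp
    have := (hud p hp).hasFDerivAt.comp_hasDerivAt p.2 (hlineY p.1 p.2)
    exact this
  have hvx : ∀ p ∈ W, HasDerivAt (fun x => v (x, p.2)) (vx p) p.1 := by
    intro p hp
    have := (hvd p hp).hasFDerivAt.comp_hasDerivAt p.1 (hlineX p.2 p.1)
    exact this
  have hvy : ∀ p ∈ W, HasDerivAt (fun y => v (p.1, y)) (vy p) p.2 := by
    intro p hp
    have := (hvd p hp).hasFDerivAt.comp_hasDerivAt p.2 (hlineY p.1 p.2)
    exact this
  -- Cauchy-Riemann in terms of ux, uy, vx, vy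
  have hCR1 : ∀ p ∈ W, ux p = vy p := by
    intro p hp
    have h := (hCR p hp).1
    rw [(hux p hp).deriv, (hvy p hp).deriv] at h
    exact h
  have hCR2 : ∀ p ∈ W, uy p = - vx p := by
    intro p hp
    have h := (hCR p hp).2
    rw [(huy p hp).deriv, (hvx p hp).deriv] at h
    exact h
  -- differentiate the constraint along x
  have hconx : ∀ p ∈ W, 2 * u p * ux p + 2 * v p * vx p = -(p.1 ^ 2)⁻¹ := by
    intro p hp
    have hL : HasDerivAt (fun x => u (x, p.2) ^ 2 + v (x, p.2) ^ 2)
        (2 * u p * ux p + 2 * v p * vx p) p.1 := by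
      have h1 := ((hux p hp).fun_pow 2).fun_add ((hvx p hp).fun_pow 2)
      simpa [mul_comm, mul_assoc, mul_left_comm] using h1
    have hEq : (fun x => u (x, p.2) ^ 2 + v (x, p.2) ^ 2) =ᶠ[nhds p.1] fun x => x⁻¹ := by
      have hmemx : {x : ℝ | (x, p.2) ∈ W} ∈ nhds p.1 := by
        have : IsOpen {x : ℝ | (x, p.2) ∈ W} :=
          hW.preimage (continuous_id.prodMk continuous_const)
        exact this.mem_nhds (by simpa using hp)
      filter_upwards [hmemx] with x hxW
      simpa [one_div] using hcon (x, p.2) hxW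
    have := hEq.deriv_eq
    rw [hL.deriv, deriv_inv] at this
    exact this
  -- differentiate the constraint along y
  have hcony : ∀ p ∈ W, 2 * u p * uy p + 2 * v p * vy p = 0 := by
    intro p hp
    have hL : HasDerivAt (fun y => u (p.1, y) ^ 2 + v (p.1, y) ^ 2)
        (2 * u p * uy p + 2 * v p * vy p) p.2 := by
      have h1 := ((huy p hp).fun_pow 2).fun_add ((hvy p hp).fun_pow 2)
      simpa [mul_comm, mul_assoc, mul_left_comm] using h1
    have hEq : (fun y => u (p.1, y) ^ 2 + v (p.1, y) ^ 2) =ᶠ[nhds p.2]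
        fun _ => (p.1)⁻¹ := by
      have hmemy : {y : ℝ | (p.1, y) ∈ W} ∈ nhds p.2 := by
        have : IsOpen {y : ℝ | (p.1, y) ∈ W} :=
          hW.preimage (continuous_const.prodMk continuous_id)
        exact this.mem_nhds (by simpa using hp)
      filter_upwards [hmemy] with y hyW
      simpa [one_div] using hcon (p.1, y) hyW
    have := hEq.deriv_eq
    rw [hL.deriv, deriv_const] at this
    exact this
  -- solve the linear system (Cramer)
  have key : ∀ p ∈ W, ux p = -u p / (2 * p.1) ∧ uy p = v p / (2 * p.1) ∧
      vx p = -v p / (2 * p.1) ∧ vy p = -u p / (2 * p.1) := by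
    intro p hp
    have hx' := hx p hp
    have hx0 : p.1 ≠ 0 := ne_of_gt hx'
    have e1 := hconx p hp
    have e2 := hcony p hp
    have e3 := hCR1 p hp
    have e4 := hCR2 p hp
    have e5 := hcon p hp
    have e4' : vx p = -uy p := by linarith
    rw [e3, e4'] at e1
    -- e1 : 2*u*vy - 2*v*uy = -(x^2)⁻¹ ; e2 : 2*u*uy + 2*v*vy = 0
    have hb : vy p = -u p / (2 * p.1) := by
      have hsum : 2 * (u p ^ 2 + v p ^ 2) * vy p = -u p * (p.1 ^ 2)⁻¹ := by
        linear_combination u p * e1 + v p * e2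
      rw [e5] at hsum
      field_simp at hsum
      rw [eq_div_iff (by positivity : (2:ℝ) * p.1 ≠ 0)]
      have h' : p.1 * (vy p * (2 * p.1)) = p.1 * -u p := by linear_combination p.1 * hsum
      exact mul_left_cancel₀ hx0 h'
    have ha : uy p = v p / (2 * p.1) := by
      have hsum : 2 * (u p ^ 2 + v p ^ 2) * uy p = v p * (p.1 ^ 2)⁻¹ := by
        linear_combination (-(v p)) * e1 + u p * e2
      rw [e5] at hsum
      field_simp at hsum
      rw [eq_div_iff (by positivity : (2:ℝ) * p.1 ≠ 0)]
      have h' : p.1 * (uy p * (2 * p.1)) = p.1 * v p := by linear_combination p.1 * hsum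
      exact mul_left_cancel₀ hx0 h'
    exact ⟨by rw [e3, hb], ha, by rw [e4', ha]; ring, hb⟩
  -- w = u√x and z = v√x
  set w : ℝ × ℝ → ℝ := fun p => u p * Real.sqrt p.1 with hw_def
  set z : ℝ × ℝ → ℝ := fun p => v p * Real.sqrt p.1 with hz_def
  have hsq : ∀ p ∈ W, Real.sqrt p.1 * Real.sqrt p.1 = p.1 := fun p hp =>
    Real.mul_self_sqrt (le_of_lt (hx p hp))
  have hsqpos : ∀ p ∈ W, 0 < Real.sqrt p.1 := fun p hp => Real.sqrt_pos.mpr (hx p hp)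
  -- x-derivative of w and z are zero
  have hwx : ∀ p ∈ W, HasDerivAt (fun x => u (x, p.2) * Real.sqrt x) 0 p.1 := by
    intro p hp
    have h := (hux p hp).mul (Real.hasDerivAt_sqrt (ne_of_gt (hx p hp)))
    have heq : ux p * Real.sqrt p.1 + u (p.1, p.2) * (1 / (2 * Real.sqrt p.1)) = 0 := by
      have hs : Real.sqrt p.1 * Real.sqrt p.1 = p.1 := Real.mul_self_sqrt (hx p hp).le
      have hsp : Real.sqrt p.1 ≠ 0 := ne_of_gt (Real.sqrt_pos.mpr (hx p hp))
      have hup : u (p.1, p.2) = u p := by simp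
      rw [hup, (key p hp).1, ← hs]
      field_simp
      rw [Real.sqrt_sq (Real.sqrt_nonneg _)]
      ring
    rw [heq] at h
    exact h
  have hzx : ∀ p ∈ W, HasDerivAt (fun x => v (x, p.2) * Real.sqrt x) 0 p.1 := by
    intro p hp
    have h := (hvx p hp).mul (Real.hasDerivAt_sqrt (ne_of_gt (hx p hp)))
    have heq : vx p * Real.sqrt p.1 + v (p.1, p.2) * (1 / (2 * Real.sqrt p.1)) = 0 := by
      have hs : Real.sqrt p.1 * Real.sqrt p.1 = p.1 := Real.mul_self_sqrt (hx p hp).le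
      have hsp : Real.sqrt p.1 ≠ 0 := ne_of_gt (Real.sqrt_pos.mpr (hx p hp))
      have hvp : v (p.1, p.2) = v p := by simp
      rw [hvp, (key p hp).2.2.1, ← hs]
      field_simp
      rw [Real.sqrt_sq (Real.sqrt_nonneg _)]
      ring
    rw [heq] at h
    exact h
  -- y-derivatives of w and z
  have hwy : ∀ p ∈ W, HasDerivAt (fun y => u (p.1, y) * Real.sqrt p.1)
      (z p / (2 * p.1)) p.2 := by
    intro p hp
    have h := (huy p hp).mul_const (Real.sqrt p.1)
    have heq : uy p * Real.sqrt p.1 = z p / (2 * p.1) := by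
      rw [(key p hp).2.1, hz_def]
      ring
    rw [heq] at h
    exact h
  have hzy : ∀ p ∈ W, HasDerivAt (fun y => v (p.1, y) * Real.sqrt p.1)
      (-(w p) / (2 * p.1)) p.2 := by
    intro p hp
    have h := (hvy p hp).mul_const (Real.sqrt p.1)
    have heq : vy p * Real.sqrt p.1 = -(w p) / (2 * p.1) := by
      rw [(key p hp).2.2.2, hw_def]
      ring
    rw [heq] at h
    exact h
  -- find a rectangle around (1,0) inside W
  obtain ⟨r, hr0, hrball⟩ := Metric.isOpen_iff.mp hW (1, 0) hmem
  have hrect : ∀ x y : ℝ, |x - 1| < r → |y| < r → (x, y) ∈ W := by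
    intro x y hx1 hy1
    apply hrball
    rw [Metric.mem_ball, Prod.dist_eq]
    simp only [Real.dist_eq, sub_zero]
    exact max_lt hx1 hy1
  set x₀ : ℝ := 1 + r / 2 with hx₀_def
  have hx₀mem : ∀ y : ℝ, |y| < r → ∀ x ∈ Set.Icc (1 : ℝ) x₀, (x, y) ∈ W := by
    intro y hy x hxI
    apply hrect x y _ hy
    rw [abs_lt]
    constructor <;> [linarith [hxI.1]; skip]
    have := hxI.2
    rw [hx₀_def] at this
    linarith
  -- constancy in x of w and z
  have hconstW : ∀ (f : ℝ × ℝ → ℝ),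
      (∀ p ∈ W, HasDerivAt (fun x => f (x, p.2) * Real.sqrt x) 0 p.1) →
      ∀ y : ℝ, |y| < r → f (x₀, y) * Real.sqrt x₀ = f (1, y) * Real.sqrt 1 := by
    intro f hf y hy
    have hx₀1 : (1 : ℝ) ≤ x₀ := by rw [hx₀_def]; linarith
    have hmain : ∀ x ∈ Set.Icc (1 : ℝ) x₀,
        f (x, y) * Real.sqrt x = f (1, y) * Real.sqrt 1 := by
      apply constant_of_has_deriv_right_zero
        (f := fun x => f (x, y) * Real.sqrt x)
      · intro x hxI
        exact (hf (x, y) (hx₀mem y hy x hxI)).continuousAt.continuousWithinAt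
      · intro x hxI
        exact (hf (x, y) (hx₀mem y hy x (Set.mem_Icc_of_Ico hxI))).hasDerivWithinAt
    exact hmain x₀ (Set.right_mem_Icc.mpr hx₀1)
  have hconstw := hconstW u hwx
  have hconstz := hconstW v hzx
  -- equate y-derivatives at (x₀,0) and (1,0)
  have hr2 : (0:ℝ) < r / 2 := by linarith
  have hmemx₀ : ((x₀, 0) : ℝ × ℝ) ∈ W := by
    apply hrect
    · rw [hx₀_def, show (1 + r / 2 - 1 : ℝ) = r / 2 by ring, abs_of_pos hr2]
      linarith
    · simpa using hr0
  have hderiv_eq : ∀ (f : ℝ × ℝ → ℝ),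
      (∀ y : ℝ, |y| < r → f (x₀, y) * Real.sqrt x₀ = f (1, y) * Real.sqrt 1) →
      deriv (fun y => f (x₀, y) * Real.sqrt x₀) 0 =
      deriv (fun y => f (1, y) * Real.sqrt 1) 0 := by
    intro f hf
    apply Filter.EventuallyEq.deriv_eq
    have : Set.Ioo (-r) r ∈ nhds (0 : ℝ) := Ioo_mem_nhds (by linarith) hr0
    filter_upwards [this] with y hy
    exact hf y (abs_lt.mpr ⟨hy.1, hy.2⟩)
  -- conclude v (1,0) = 0
  have hz0 : z (1, 0) = 0 := by
    have h1 := hderiv_eq u hconstw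
    rw [(hwy (x₀, 0) hmemx₀).deriv, (hwy (1, 0) hmem).deriv] at h1
    have h2 := hconstz 0 (by simpa using hr0)
    simp only [Real.sqrt_one, mul_one] at h2
    -- h1 : z (x₀,0) / (2 * x₀) = z (1,0) / (2 * 1)
    have hzz : z (x₀, 0) = z (1, 0) := by
      rw [hz_def]
      simp only
      rw [h2]
      simp [Real.sqrt_one]
    rw [hzz] at h1
    have hx₀ne : (x₀ : ℝ) ≠ 1 := by rw [hx₀_def]; intro h; linarith [(by linarith : (0:ℝ) < r/2)]
    have hx₀pos : (0 : ℝ) < x₀ := by rw [hx₀_def]; linarith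
    field_simp at h1
    rcases mul_eq_zero.mp (show z (1, 0) * (x₀ - 1) = 0 by linear_combination -h1) with h | h
    · exact h
    · exact absurd (by linarith) hx₀ne
  have hw0 : w (1, 0) = 0 := by
    have h1 := hderiv_eq v hconstz
    rw [(hzy (x₀, 0) hmemx₀).deriv, (hzy (1, 0) hmem).deriv] at h1
    have h2 := hconstw 0 (by simpa using hr0)
    simp only [Real.sqrt_one, mul_one] at h2
    have hww : w (x₀, 0) = w (1, 0) := by
      rw [hw_def]
      simp only
      rw [h2]
      simp [Real.sqrt_one]
    rw [hww] at h1
    have hx₀ne : (x₀ : ℝ) ≠ 1 := by rw [hx₀_def]; intro h; linarith [(by linarith : (0:ℝ) < r/2)]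
    have hx₀pos : (0 : ℝ) < x₀ := by rw [hx₀_def]; linarith
    field_simp at h1
    rcases mul_eq_zero.mp (show w (1, 0) * (x₀ - 1) = 0 by linear_combination h1) with h | h
    · exact h
    · exact absurd (by linarith) hx₀ne
  -- contradiction with the constraint at (1,0)
  have hfalse : False := by
    have hc := hcon (1, 0) hmem
    have hu0 : u (1, 0) = 0 := by
      have := hw0
      rw [hw_def] at this
      simpa [Real.sqrt_one] using this
    have hv0 : v (1, 0) = 0 := by
      have := hz0
      rw [hz_def] at this
      simpa [Real.sqrt_one] using this
    rw [hu0, hv0] at hc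
    norm_num at hc
  exact ⟨fun p hp => hfalse.elim, fun p hp => hfalse.elim, fun p hp => hfalse.elim, hfalse⟩
end

section
/- Let u, v : W → ℝ be C¹ on a connected open subset W of {x > 0} satisfying u_x = −u/(2x), v_x = −v/(2x), u_y = v/(2x), v_y = −u/(2x). If W contains a nondegenerate rectangle I × J with I containing two distinct points, then u ≡ 0 and v ≡ 0 on W. -/
open Set Metric

lemma slice_x (f : ℝ × ℝ → ℝ) (p : ℝ × ℝ) (hf : DifferentiableAt ℝ f p) :
    HasDerivAt (fun x => f (x, p.2)) (fderiv ℝ f p (1, 0)) p.1 := by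
  have hγ : HasDerivAt (fun x : ℝ => (x, p.2)) ((1:ℝ), (0:ℝ)) p.1 :=
    (hasDerivAt_id p.1).prodMk (hasDerivAt_const p.1 p.2)
  exact hf.hasFDerivAt.comp_hasDerivAt p.1 hγ

lemma slice_y (f : ℝ × ℝ → ℝ) (p : ℝ × ℝ) (hf : DifferentiableAt ℝ f p) :
    HasDerivAt (fun y => f (p.1, y)) (fderiv ℝ f p (0, 1)) p.2 := by
  have hγ : HasDerivAt (fun y : ℝ => (p.1, y)) ((0:ℝ), (1:ℝ)) p.2 :=
    (hasDerivAt_const p.2 p.1).prodMk (hasDerivAt_id p.2)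
  exact hf.hasFDerivAt.comp_hasDerivAt p.2 hγ

lemma clm_decomp (L : ℝ × ℝ →L[ℝ] ℝ) (w : ℝ × ℝ) :
    L w = w.1 * L (1, 0) + w.2 * L (0, 1) := by
  have h : w = w.1 • ((1:ℝ), (0:ℝ)) + w.2 • ((0:ℝ), (1:ℝ)) := by
    simp [Prod.ext_iff]
  calc L w = L (w.1 • ((1:ℝ), (0:ℝ)) + w.2 • ((0:ℝ), (1:ℝ))) := by rw [← h]
    _ = w.1 * L (1, 0) + w.2 * L (0, 1) := by
        rw [map_add, map_smul, map_smul, smul_eq_mul, smul_eq_mul]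

theorem first_order_system_forces_zero
    (W : Set (ℝ × ℝ)) (u v : ℝ × ℝ → ℝ)
    (hW : IsOpen W) (hWconn : IsConnected W)
    (hxpos : ∀ p ∈ W, 0 < p.1)
    (hu : ContDiffOn ℝ 1 u W) (hv : ContDiffOn ℝ 1 v W)
    (hux : ∀ p ∈ W, deriv (fun x => u (x, p.2)) p.1 = - u p / (2 * p.1))
    (hvx : ∀ p ∈ W, deriv (fun x => v (x, p.2)) p.1 = - v p / (2 * p.1))
    (huy : ∀ p ∈ W, deriv (fun y => u (p.1, y)) p.2 = v p / (2 * p.1))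
    (hvy : ∀ p ∈ W, deriv (fun y => v (p.1, y)) p.2 = - u p / (2 * p.1))
    (hrect : ∃ a b c d : ℝ, a < b ∧ c < d ∧ Set.Ioo a b ×ˢ Set.Ioo c d ⊆ W) :
    ∀ p ∈ W, u p = 0 ∧ v p = 0 := by
  obtain ⟨a, b, c, d, hab, hcd, hsub⟩ := hrect
  -- differentiability
  have hud : ∀ p ∈ W, DifferentiableAt ℝ u p := fun p hp =>
    (hu.contDiffAt (hW.mem_nhds hp)).differentiableAt one_ne_zero
  have hvd : ∀ p ∈ W, DifferentiableAt ℝ v p := fun p hp =>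
    (hv.contDiffAt (hW.mem_nhds hp)).differentiableAt one_ne_zero
  -- partial derivative values via fderiv
  have hLux : ∀ p ∈ W, fderiv ℝ u p (1, 0) = - u p / (2 * p.1) := fun p hp => by
    rw [← (slice_x u p (hud p hp)).deriv]; exact hux p hp
  have hLvx : ∀ p ∈ W, fderiv ℝ v p (1, 0) = - v p / (2 * p.1) := fun p hp => by
    rw [← (slice_x v p (hvd p hp)).deriv]; exact hvx p hp
  have hLuy : ∀ p ∈ W, fderiv ℝ u p (0, 1) = v p / (2 * p.1) := fun p hp => by
    rw [← (slice_y u p (hud p hp)).deriv]; exact huy p hp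
  have hLvy : ∀ p ∈ W, fderiv ℝ v p (0, 1) = - u p / (2 * p.1) := fun p hp => by
    rw [← (slice_y v p (hvd p hp)).deriv]; exact hvy p hp
  -- the function H = x * (u^2 + v^2) has zero derivative on W
  set H : ℝ × ℝ → ℝ := fun q => q.1 * (u q * u q + v q * v q) with hHdef
  have hH0 : ∀ p ∈ W, HasFDerivAt H (0 : ℝ × ℝ →L[ℝ] ℝ) p := by
    intro p hp
    have hx0 : p.1 ≠ 0 := ne_of_gt (hxpos p hp)
    have h1 : HasFDerivAt (fun q : ℝ × ℝ => q.1) (ContinuousLinearMap.fst ℝ ℝ ℝ) p :=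
      hasFDerivAt_fst
    have hu' := (hud p hp).hasFDerivAt
    have hv' := (hvd p hp).hasFDerivAt
    have hE := (hu'.mul hu').add (hv'.mul hv')
    have hM := h1.mul hE
    refine hM.congr_fderiv ?_
    apply ContinuousLinearMap.ext
    intro w
    simp only [ContinuousLinearMap.add_apply, ContinuousLinearMap.smul_apply,
      ContinuousLinearMap.coe_fst', ContinuousLinearMap.zero_apply, smul_eq_mul, Pi.add_apply, Pi.mul_apply]
    rw [clm_decomp (fderiv ℝ u p) w, clm_decomp (fderiv ℝ v p) w,
      hLux p hp, hLvx p hp, hLuy p hp, hLvy p hp]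
    field_simp
    ring
  -- H is locally constant on W
  have hloc : ∀ p ∈ W, ∀ᶠ q in nhds p, H q = H p := by
    intro p hp
    obtain ⟨r, hr, hball⟩ := Metric.isOpen_iff.mp hW p hp
    filter_upwards [Metric.ball_mem_nhds p hr] with q hq
    refine (convex_ball p r).is_const_of_fderivWithin_eq_zero
      (fun z hz => ((hH0 z (hball hz)).differentiableAt).differentiableWithinAt)
      (fun z hz => ?_) hq (Metric.mem_ball_self hr)
    rw [fderivWithin_of_mem_nhds (isOpen_ball.mem_nhds hz)]
    exact (hH0 z (hball hz)).fderiv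

  -- constancy in x of sqrt x * f (x, y) on the rectangle
  have keyconst : ∀ (f : ℝ × ℝ → ℝ),
      (∀ p ∈ W, DifferentiableAt ℝ f p) →
      (∀ p ∈ W, fderiv ℝ f p (1, 0) = - f p / (2 * p.1)) →
      ∀ x1 ∈ Set.Ioo a b, ∀ x2 ∈ Set.Ioo a b, ∀ y ∈ Set.Ioo c d,
        Real.sqrt x1 * f (x1, y) = Real.sqrt x2 * f (x2, y) := by
    intro f hfd hfx x1 hx1 x2 hx2 y hy
    set φ : ℝ → ℝ := fun x => Real.sqrt x * f (x, y) with hφdef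
    have hφ : ∀ x ∈ Set.Ioo a b, HasDerivAt φ 0 x := by
      intro x hx
      have hpW : ((x, y) : ℝ × ℝ) ∈ W := hsub ⟨hx, hy⟩
      have hxp : 0 < x := hxpos (x, y) hpW
      have hs := Real.hasDerivAt_sqrt (ne_of_gt hxp)
      have hslice : HasDerivAt (fun t => f (t, y)) (- f (x, y) / (2 * x)) x := by
        have h := slice_x f (x, y) (hfd _ hpW)
        rw [hfx _ hpW] at h
        exact h
      have hm := hs.mul hslice
      refine hm.congr_deriv ?_
      symm
      have hss : Real.sqrt x * Real.sqrt x = x := Real.mul_self_sqrt hxp.le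
      have hsx : Real.sqrt x ≠ 0 := by positivity
      field_simp
      linear_combination (f (x, y)) * hss
    refine (convex_Ioo a b).is_const_of_fderivWithin_eq_zero
      (fun z hz => (hφ z hz).differentiableAt.differentiableWithinAt)
      (fun z hz => ?_) hx1 hx2
    rw [fderivWithin_of_mem_nhds (isOpen_Ioo.mem_nhds hz)]
    have h := (hφ z hz).hasFDerivAt.fderiv
    rw [h]; ext; simp
  -- the rectangle argument: find a point where u = v = 0
  have hp0 : ∃ p0 ∈ W, H p0 = 0 := by
    set x1 : ℝ := (2 * a + b) / 3 with hx1def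
    set x2 : ℝ := (a + 2 * b) / 3 with hx2def
    set y0 : ℝ := (c + d) / 2 with hy0def
    have hx1 : x1 ∈ Set.Ioo a b := ⟨by rw [hx1def]; linarith, by rw [hx1def]; linarith⟩
    have hx2 : x2 ∈ Set.Ioo a b := ⟨by rw [hx2def]; linarith, by rw [hx2def]; linarith⟩
    have hy0 : y0 ∈ Set.Ioo c d := ⟨by rw [hy0def]; linarith, by rw [hy0def]; linarith⟩
    have hlt : x1 < x2 := by rw [hx1def, hx2def]; linarith
    have h1W : ((x1, y0) : ℝ × ℝ) ∈ W := hsub ⟨hx1, hy0⟩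
    have h2W : ((x2, y0) : ℝ × ℝ) ∈ W := hsub ⟨hx2, hy0⟩
    have h1p : 0 < x1 := hxpos _ h1W
    have h2p : 0 < x2 := hxpos _ h2W
    have hs1 : Real.sqrt x1 ≠ 0 := by positivity
    -- y-derivatives of the slices
    have hderiv : ∀ (f : ℝ × ℝ → ℝ), (∀ p ∈ W, DifferentiableAt ℝ f p) →
        ∀ x, ((x, y0) : ℝ × ℝ) ∈ W →
        deriv (fun y => Real.sqrt x * f (x, y)) y0
          = Real.sqrt x * deriv (fun y => f (x, y)) y0 := by
      intro f hfd x hxW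
      have hdiff : DifferentiableAt ℝ (fun y => f (x, y)) y0 := by
        have := (slice_y f (x, y0) (hfd _ hxW)).differentiableAt
        simpa using this
      exact deriv_const_mul _ hdiff
    -- the common-value argument, for either pair of data
    have main : ∀ (f g : ℝ × ℝ → ℝ),
        (∀ p ∈ W, DifferentiableAt ℝ f p) →
        (∀ p ∈ W, DifferentiableAt ℝ g p) →
        (∀ p ∈ W, fderiv ℝ f p (1, 0) = - f p / (2 * p.1)) →
        (∀ p ∈ W, fderiv ℝ g p (1, 0) = - g p / (2 * p.1)) →
        (∀ p ∈ W, deriv (fun y => f (p.1, y)) p.2 = g p / (2 * p.1)) →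
        g (x1, y0) = 0 := by
      intro f g hfd hgd hfx hgx hfy
      have hEf : (fun y => Real.sqrt x1 * f (x1, y)) =ᶠ[nhds y0]
          (fun y => Real.sqrt x2 * f (x2, y)) := by
        filter_upwards [isOpen_Ioo.mem_nhds hy0] with y hy
        exact keyconst f hfd hfx x1 hx1 x2 hx2 y hy
      have hd := hEf.deriv_eq
      rw [hderiv f hfd x1 h1W, hderiv f hfd x2 h2W] at hd
      have e1 := hfy (x1, y0) h1W
      have e2 := hfy (x2, y0) h2W
      simp only at e1 e2
      rw [e1, e2] at hd
      have hA : Real.sqrt x1 * g (x1, y0) = Real.sqrt x2 * g (x2, y0) :=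
        keyconst g hgd hgx x1 hx1 x2 hx2 y0 hy0
      set A := Real.sqrt x1 * g (x1, y0) with hAdef
      have e3 : A / (2 * x1) = Real.sqrt x2 * g (x2, y0) / (2 * x2) := by
        rw [mul_div_assoc, mul_div_assoc]; exact hd
      rw [← hA] at e3
      have e4 : A * (2 * x2) = A * (2 * x1) :=
        (div_eq_div_iff (by positivity) (by positivity)).mp e3
      have hA0 : A = 0 := by
        have h5 : A * (2 * (x2 - x1)) = 0 := by linear_combination e4
        rcases mul_eq_zero.mp h5 with h | h
        · exact h
        · exfalso; linarith
      rcases mul_eq_zero.mp (hAdef ▸ hA0) with h | h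
      · exact absurd h hs1
      · exact h
    have hv0 : v (x1, y0) = 0 := main u v hud hvd hLux hLvx huy
    have hu0 : u (x1, y0) = 0 := by
      have := main v (fun p => - u p) hvd (fun p hp => (hud p hp).neg)
        hLvx ?_ ?_
      · have h2 : -u (x1, y0) = 0 := this
        linarith
      · intro p hp
        rw [fderiv_fun_neg]
        simp only [ContinuousLinearMap.neg_apply]
        rw [hLux p hp]
        ring
      · intro p hp
        have h3 := hvy p hp
        simpa using h3
    refine ⟨(x1, y0), h1W, ?_⟩
    rw [hHdef]
    simp [hu0, hv0]
  -- clopen argument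
  obtain ⟨p0, hp0W, hHp0⟩ := hp0
  have hzero : ∀ p ∈ W, H p = 0 := by
    set S : Set (ℝ × ℝ) := {p ∈ W | H p = 0} with hSdef
    set T : Set (ℝ × ℝ) := {p ∈ W | H p ≠ 0} with hTdef
    have hSopen : IsOpen S := by
      rw [isOpen_iff_mem_nhds]
      rintro p ⟨hpW, hpH⟩
      filter_upwards [hloc p hpW, hW.mem_nhds hpW] with q hq hqW
      exact ⟨hqW, hq.trans hpH⟩
    have hTopen : IsOpen T := by
      rw [isOpen_iff_mem_nhds]
      rintro p ⟨hpW, hpH⟩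
      filter_upwards [hloc p hpW, hW.mem_nhds hpW] with q hq hqW
      exact ⟨hqW, hq ▸ hpH⟩
    have hWS : W ⊆ S := by
      refine hWconn.isPreconnected.subset_left_of_subset_union hSopen hTopen ?_ ?_ ?_
      · rw [Set.disjoint_left]; rintro p ⟨_, h1⟩ ⟨_, h2⟩; exact h2 h1
      · intro p hp
        by_cases h : H p = 0
        · exact Or.inl ⟨hp, h⟩
        · exact Or.inr ⟨hp, h⟩
      · exact ⟨p0, hp0W, hp0W, hHp0⟩
    exact fun p hp => (hWS hp).2
  intro p hp
  have hHp := hzero p hp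
  have hx0 : 0 < p.1 := hxpos p hp
  have hsq : u p * u p + v p * v p = 0 := by
    have := hHp
    rw [hHdef] at this
    simp only at this
    rcases mul_eq_zero.mp this with h | h
    · exact absurd h (ne_of_gt hx0)
    · exact h
  constructor
  · nlinarith [mul_self_nonneg (u p), mul_self_nonneg (v p)]
  · nlinarith [mul_self_nonneg (u p), mul_self_nonneg (v p)]
end
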